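/- The function q(c_1, ..., c_K) = Σ_{k=1}^K ((2^{2c_k} - 1)/h_k^2) · Π_{j=1}^{k-1} 2^{2c_j} is convex on ℝ^K (as a function of (c_1, ..., c_K)) for any fixed positive gains h_1, ..., h_K. -/

import Mathlib

open Finset

/-- The power function `q(c) = Σ_k ((2^{2c_k}-1)/h_k^2)·Π_{j<k} 2^{2c_j}`. -/
noncomputable def qPow (K : ℕ) (h : Fin K → ℝ) (c : Fin K → ℝ) : ℝ :=
  ∑ k : Fin K, (((2:ℝ) ^ (2 * c k) - 1) / (h k) ^ 2) *
    ∏ j ∈ Finset.univ.filter (fun j : Fin K => j < k), (2:ℝ) ^ (2 * c j)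

lemma convexOn_finset_sum {ι E : Type*} [AddCommGroup E] [Module ℝ E]
    (t : Finset ι) (f : ι → E → ℝ)
    (hf : ∀ i ∈ t, ConvexOn ℝ Set.univ (f i)) :
    ConvexOn ℝ Set.univ (fun x => ∑ i ∈ t, f i x) := by
  classical
  induction t using Finset.induction_on with
  | empty => simpa using convexOn_const (0:ℝ) convex_univ
  | insert i s hnot ih =>
      simp only [Finset.sum_insert hnot]
      exact (hf _ (Finset.mem_insert_self _ _)).add
        (ih fun j hj => hf j (Finset.mem_insert_of_mem hj))

lemma convexOn_expSum {K : ℕ} (S : Finset (Fin K)) :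
    ConvexOn ℝ Set.univ (fun c : Fin K → ℝ =>
      Real.exp (∑ j ∈ S, (2 * Real.log 2) * c j)) := by
  classical
  have hlin : IsLinearMap ℝ (fun c : Fin K → ℝ => ∑ j ∈ S, (2 * Real.log 2) * c j) := by
    constructor
    · intro x y; simp [mul_add, Finset.sum_add_distrib]
    · intro a x; simp [Finset.mul_sum, mul_left_comm, smul_eq_mul, mul_assoc]
  have := convexOn_exp.comp_affineMap (IsLinearMap.mk' _ hlin).toAffineMap
  exact this

/-- Convexity of `q` on ℝ^K, for positive gains with `h_1^2 ≤ … ≤ h_K^2`. -/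
theorem stmt2 (K : ℕ) (hK : 1 ≤ K) (h : Fin K → ℝ)
    (hh : ∀ k, 0 < h k)
    (hmono : ∀ j k : Fin K, j ≤ k → (h j) ^ 2 ≤ (h k) ^ 2) :
    ConvexOn ℝ Set.univ (qPow K h) := by
  classical
  obtain ⟨m, rfl⟩ : ∃ m, K = m + 1 := ⟨K - 1, (Nat.succ_pred_eq_of_pos hK).symm⟩
  set a : ℕ → ℝ := fun n => if hn : n < m + 1 then 1 / (h ⟨n, hn⟩) ^ 2 else 0 with ha
  set G : ℕ → (Fin (m+1) → ℝ) → ℝ := fun n c =>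
    Real.exp (∑ j ∈ univ.filter (fun j : Fin (m+1) => (j:ℕ) < n), (2 * Real.log 2) * c j)
    with hGdef
  have hpow : ∀ x : ℝ, (2:ℝ) ^ (2*x) = Real.exp ((2 * Real.log 2) * x) := by
    intro x
    rw [Real.rpow_def_of_pos (by norm_num : (0:ℝ) < 2)]
    ring_nf
  have hGk : ∀ (k : Fin (m+1)) (c : Fin (m+1) → ℝ),
      (∏ j ∈ univ.filter (fun j : Fin (m+1) => j < k), (2:ℝ) ^ (2 * c j)) = G (k:ℕ) c := by
    intro k c
    have hfil : univ.filter (fun j : Fin (m+1) => j < k)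
        = univ.filter (fun j : Fin (m+1) => (j:ℕ) < (k:ℕ)) := by
      ext j; simp only [mem_filter, mem_univ, true_and, Fin.lt_def]
    rw [hfil]; simp only [hGdef]; rw [Real.exp_sum]
    exact Finset.prod_congr rfl fun j _ => hpow (c j)
  have hGstep : ∀ (k : Fin (m+1)) (c : Fin (m+1) → ℝ),
      G ((k:ℕ)+1) c = (2:ℝ) ^ (2 * c k) * G (k:ℕ) c := by
    intro k c
    have hins : univ.filter (fun j : Fin (m+1) => (j:ℕ) < (k:ℕ)+1)
        = insert k (univ.filter (fun j : Fin (m+1) => (j:ℕ) < (k:ℕ))) := by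
      ext j
      simp only [mem_filter, mem_univ, true_and, mem_insert]
      rw [Fin.ext_iff]; omega
    have hnot : k ∉ univ.filter (fun j : Fin (m+1) => (j:ℕ) < (k:ℕ)) := by simp
    simp only [hGdef, hins, Finset.sum_insert hnot, Real.exp_add]
    rw [hpow]
  have key : qPow (m+1) h = fun c =>
      ((∑ k ∈ range m, (a k - a (k+1)) * G (k+1) c) + a m * G (m+1) c) + (- a 0) := by
    funext c
    have hterm : ∀ k : Fin (m+1),
        (((2:ℝ) ^ (2 * c k) - 1) / (h k) ^ 2) *
          ∏ j ∈ univ.filter (fun j : Fin (m+1) => j < k), (2:ℝ) ^ (2 * c j)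
        = a (k:ℕ) * (G ((k:ℕ)+1) c - G (k:ℕ) c) := by
      intro k
      rw [hGk, hGstep]
      simp only [ha]
      rw [dif_pos k.isLt]
      simp only [Fin.eta]
      ring
    have h1 : qPow (m+1) h c = ∑ k ∈ range (m+1), a k * (G (k+1) c - G k c) := by
      rw [qPow]
      rw [Finset.sum_congr rfl fun k _ => hterm k]
      exact Fin.sum_univ_eq_sum_range (fun n => a n * (G (n+1) c - G n c)) (m+1)
    have hG0 : G 0 c = 1 := by
      rw [hGdef]
      have : univ.filter (fun j : Fin (m+1) => (j:ℕ) < 0) = ∅ := by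
        ext j; simp
      simp [this]
    rw [h1]
    simp only [mul_sub, Finset.sum_sub_distrib]
    rw [Finset.sum_range_succ (fun k => a k * G (k+1) c) m,
        Finset.sum_range_succ' (fun k => a k * G k c) m, hG0]
    simp only [sub_mul, Finset.sum_sub_distrib]
    ring
  rw [key]
  apply ConvexOn.add_const
  have ham : 0 ≤ a m := by
    simp only [ha]; rw [dif_pos (by omega : m < m + 1)]
    positivity
  have hw : ∀ k, k < m → 0 ≤ a k - a (k+1) := by
    intro k hk
    simp only [ha]
    rw [dif_pos (by omega : k < m + 1), dif_pos (by omega : k + 1 < m + 1)]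
    have hle := hmono ⟨k, by omega⟩ ⟨k+1, by omega⟩ (by simp [Fin.mk_le_mk])
    have h1 : (0:ℝ) < (h ⟨k, by omega⟩) ^ 2 := pow_pos (hh _) 2
    have := one_div_le_one_div_of_le h1 hle
    linarith
  refine ConvexOn.add ?_ ?_
  · apply convexOn_finset_sum
    intro k hk
    have := (convexOn_expSum (K := m+1)
      (univ.filter (fun j : Fin (m+1) => (j:ℕ) < k+1))).smul (hw k (Finset.mem_range.mp hk))
    simpa [smul_eq_mul, hGdef] using this
  · have := (convexOn_expSum (K := m+1)
      (univ.filter (fun j : Fin (m+1) => (j:ℕ) < m+1))).smul ham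
    simpa [smul_eq_mul, hGdef] using this
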